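/- Let G be the 3×4 grid graph on vertex set {a,b,c,d,e,f,g,h,i,j,k,l} with edge set {ab, bc, cd, ef, fg, gh, ij, jk, kl, ae, bf, cg, dh, ei, fj, gk, hl} and vertex weights w(a) = w(c) = w(d) = w(e) = w(f) = w(h) = w(i) = w(k) = w(l) = 10 and w(b) = w(g) = w(j) = 1. Then the maximum of Σ_{v∈V'} w(v) over all subsets V' whose induced subgraph G[V'] is acyclic equals 90, while every subset V' whose induced subgraph G[V'] is a tree (connected and acyclic) satisfies Σ_{v∈V'} w(v) < 90. Hence the optimal values of the maximum weighted induced forest and the maximum weighted induced tree problems differ on G. -/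
import Mathlib


/-- The 3×4 grid graph on `{a,...,l} = {0,...,11}` with edges
`ab, bc, cd, ef, fg, gh, ij, jk, kl, ae, bf, cg, dh, ei, fj, gk, hl`. -/
def exGraph14 : SimpleGraph (Fin 12) :=
  SimpleGraph.fromRel (fun u v =>
    (u, v) ∈ ([(0, 1), (1, 2), (2, 3), (4, 5), (5, 6), (6, 7), (8, 9), (9, 10),
      (10, 11), (0, 4), (1, 5), (2, 6), (3, 7), (4, 8), (5, 9), (6, 10), (7, 11)] :
      List (Fin 12 × Fin 12)))

/-- Weights `w b = w g = w j = 1` and all other vertices have weight `10`. -/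
def exWeight14 : Fin 12 → ℝ := ![10, 1, 10, 10, 10, 10, 1, 10, 10, 1, 10, 10]

instance : DecidableRel exGraph14.Adj := fun u v =>
  inferInstanceAs (Decidable (u ≠ v ∧ _))

instance instIndAdj14 (s : Set (Fin 12)) : DecidableRel (exGraph14.induce s).Adj := fun u v =>
  inferInstanceAs (Decidable (exGraph14.Adj u v))

instance {V : Type*} [DecidableEq V] (e : Sym2 V) :
    DecidableRel (SimpleGraph.fromEdgeSet {e}).Adj := fun u v =>
  decidable_of_iff (s(u,v) = e ∧ u ≠ v) (by simp [SimpleGraph.fromEdgeSet_adj])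

lemma not_acyclic_of_square14 {V : Type*} {G : SimpleGraph V} {a b c d : V}
    (hab : G.Adj a b) (hbc : G.Adj b c) (hcd : G.Adj c d) (hda : G.Adj d a)
    (hac : a ≠ c) (hbd : b ≠ d) : ¬ G.IsAcyclic := fun h => by
  refine h (.cons hab (.cons hbc (.cons hcd (.cons hda .nil)))) ?_
  rw [SimpleGraph.Walk.isCycle_def]
  refine ⟨?_, by simp, ?_⟩
  · rw [SimpleGraph.Walk.isTrail_def]
    simp [Sym2.eq_iff, hab.ne, hbc.ne, hcd.ne, hda.ne, hac, hbd,
      hab.ne', hbc.ne', hcd.ne', hda.ne', hac.symm, hbd.symm]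
  · simp [hbc.ne, hcd.ne, hda.ne, hda.ne', hac.symm, hbd, hab.ne']

/-- the optimal forest: two trees `{a,e,f,i}` and `{c,d,h,k,l}` -/
def exV0 : Finset (Fin 12) := {0, 2, 3, 4, 5, 7, 8, 10, 11}

lemma ind_not_acyclic14 {V' : Finset (Fin 12)} {p q r s : Fin 12}
    (hp : p ∈ V') (hq : q ∈ V') (hr : r ∈ V') (hs : s ∈ V')
    (hpq : exGraph14.Adj p q) (hqr : exGraph14.Adj q r) (hrs : exGraph14.Adj r s)
    (hsp : exGraph14.Adj s p) (hpr : p ≠ r) (hqs : q ≠ s) :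
    ¬ (exGraph14.induce (V' : Set (Fin 12))).IsAcyclic :=
  not_acyclic_of_square14 (a := ⟨p, Finset.mem_coe.mpr hp⟩) (b := ⟨q, Finset.mem_coe.mpr hq⟩)
    (c := ⟨r, Finset.mem_coe.mpr hr⟩) (d := ⟨s, Finset.mem_coe.mpr hs⟩)
    hpq hqr hrs hsp
    (fun h => hpr (congrArg Subtype.val h)) (fun h => hqs (congrArg Subtype.val h))

lemma exWeight14_nonneg (v : Fin 12) : 0 ≤ exWeight14 v := by
  fin_cases v <;> norm_num [exWeight14]

lemma sum_univ_exWeight14 : ∑ v : Fin 12, exWeight14 v = 93 := by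
  simp [Fin.sum_univ_succ, exWeight14]
  norm_num

lemma sum_exV0 : ∑ v ∈ exV0, exWeight14 v = 90 := by
  rw [show exV0 = {0, 2, 3, 4, 5, 7, 8, 10, 11} from rfl,
    Finset.sum_insert (by decide), Finset.sum_insert (by decide),
    Finset.sum_insert (by decide), Finset.sum_insert (by decide),
    Finset.sum_insert (by decide), Finset.sum_insert (by decide),
    Finset.sum_insert (by decide), Finset.sum_insert (by decide),
    Finset.sum_singleton]
  show (10:ℝ) + (10 + (10 + (10 + (10 + (10 + (10 + (10 + 10))))))) = 90
  norm_num

set_option maxHeartbeats 4000000 in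
lemma exV0_acyclic : (exGraph14.induce (exV0 : Set (Fin 12))).IsAcyclic := by
  rw [SimpleGraph.isAcyclic_iff_forall_adj_isBridge]
  simp only [SimpleGraph.isBridge_iff]
  decide

set_option maxHeartbeats 4000000 in
lemma exV0_not_connected : ¬ (exGraph14.induce (exV0 : Set (Fin 12))).Connected := fun h => by
  have h2 := h.preconnected ⟨0, by decide⟩ ⟨2, by decide⟩
  revert h2
  decide

lemma key14 (V' : Finset (Fin 12)) (hac : (exGraph14.induce (V' : Set (Fin 12))).IsAcyclic) :
    (∑ v ∈ V', exWeight14 v ≤ 83) ∨ V' = exV0 := by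
  by_cases hsub : ({0, 2, 3, 4, 5, 7, 8, 10, 11} : Finset (Fin 12)) ⊆ V'
  · right
    have h1 : (1 : Fin 12) ∉ V' := fun h1 => ind_not_acyclic14
      (hsub (by decide)) h1 (hsub (by decide)) (hsub (by decide))
      (p := 0) (q := 1) (r := 5) (s := 4)
      (by decide) (by decide) (by decide) (by decide) (by decide) (by decide) hac
    have h6 : (6 : Fin 12) ∉ V' := fun h6 => ind_not_acyclic14
      (hsub (by decide)) (hsub (by decide)) (hsub (by decide)) h6
      (p := 2) (q := 3) (r := 7) (s := 6)
      (by decide) (by decide) (by decide) (by decide) (by decide) (by decide) hac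
    have h9 : (9 : Fin 12) ∉ V' := fun h9 => ind_not_acyclic14
      (hsub (by decide)) (hsub (by decide)) h9 (hsub (by decide))
      (p := 4) (q := 5) (r := 9) (s := 8)
      (by decide) (by decide) (by decide) (by decide) (by decide) (by decide) hac
    refine Finset.Subset.antisymm (fun v hv => ?_) hsub
    fin_cases v <;> first
      | decide
      | exact absurd hv h1
      | exact absurd hv h6
      | exact absurd hv h9
  · left
    obtain ⟨v, hv, hvn⟩ := Finset.not_subset.mp hsub
    have hw : exWeight14 v = 10 := by fin_cases hv <;> rfl
    have hle : ∑ u ∈ V', exWeight14 u ≤ ∑ u ∈ Finset.univ.erase v, exWeight14 u := by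
      refine Finset.sum_le_sum_of_subset_of_nonneg (fun u hu => ?_)
        (fun u _ _ => exWeight14_nonneg u)
      exact Finset.mem_erase.mpr ⟨fun h => hvn (h ▸ hu), Finset.mem_univ u⟩
    have herase : ∑ u ∈ Finset.univ.erase v, exWeight14 u
        = (∑ u : Fin 12, exWeight14 u) - exWeight14 v :=
      Finset.sum_erase_eq_sub (Finset.mem_univ v)
    rw [herase, sum_univ_exWeight14, hw] at hle
    linarith

/-- On this grid graph the maximum weight of a subset inducing a forest is
`90`, while every subset inducing a tree has weight strictly less than `90`;
hence the MWIF and MWIT optima differ. -/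
theorem mwif_ne_mwit_grid_example :
    IsGreatest {x : ℝ | ∃ V' : Finset (Fin 12),
      (exGraph14.induce (V' : Set (Fin 12))).IsAcyclic ∧
        x = ∑ v ∈ V', exWeight14 v} 90 ∧
    (∀ V' : Finset (Fin 12), (exGraph14.induce (V' : Set (Fin 12))).IsTree →
      ∑ v ∈ V', exWeight14 v < 90) := by
  constructor
  · constructor
    · exact ⟨exV0, exV0_acyclic, sum_exV0.symm⟩
    · rintro x ⟨V', hac, rfl⟩
      rcases key14 V' hac with h | rfl
      · linarith
      · exact le_of_eq sum_exV0
  · intro V' ht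
    rcases key14 V' ht.IsAcyclic with h | rfl
    · linarith
    · exact absurd ht.isConnected exV0_not_connected
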